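/- Subject expansion holds for η: if M is a linear λ-term, M η-reduces to N, and Γ ⊢ N : σ, then Γ ⊢ M : σ. In particular, if x is not free in M and Γ ⊢ M : σ, then Γ ⊢ λx. M x : σ. -/

import Mathlib

namespace TypeIso

open Relation

/-- Untyped λ-terms with named variables. -/
inductive Term : Type
  | var : ℕ → Term
  | app : Term → Term → Term
  | lam : ℕ → Term → Term
deriving DecidableEq

namespace Term

/-- Free variables. -/
def fv : Term → Finset ℕ
  | var x => {x}
  | app M N => fv M ∪ fv N
  | lam x M => fv M \ {x}

/-- Substitution `M[N/x]` (naive; adequate for the linear terms considered). -/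
def subst : Term → ℕ → Term → Term
  | var y, x, N => if y = x then N else var y
  | app M₁ M₂, x, N => app (subst M₁ x N) (subst M₂ x N)
  | lam y M, x, N => if y = x then lam y M else lam y (subst M x N)

end Term

open Term

/-- One-step β-reduction. -/
inductive Beta : Term → Term → Prop
  | beta (x M N) : Beta (Term.app (Term.lam x M) N) (Term.subst M x N)
  | appL {M M'} (N) : Beta M M' → Beta (Term.app M N) (Term.app M' N)
  | appR (M) {N N'} : Beta N N' → Beta (Term.app M N) (Term.app M N')
  | lam (x) {M M'} : Beta M M' → Beta (Term.lam x M) (Term.lam x M')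

/-- One-step η-reduction. -/
inductive Eta : Term → Term → Prop
  | eta (x M) : x ∉ fv M → Eta (Term.lam x (Term.app M (Term.var x))) M
  | appL {M M'} (N) : Eta M M' → Eta (Term.app M N) (Term.app M' N)
  | appR (M) {N N'} : Eta N N' → Eta (Term.app M N) (Term.app M N')
  | lam (x) {M M'} : Eta M M' → Eta (Term.lam x M) (Term.lam x M')

def BetaStar : Term → Term → Prop := ReflTransGen Beta
def EtaStar : Term → Term → Prop := ReflTransGen Eta
/-- η-expansion: the converse of one-step η-reduction. -/
def EtaExp : Term → Term → Prop := fun a b => Eta b a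
def EtaExpStar : Term → Term → Prop := ReflTransGen EtaExp
def BetaConv : Term → Term → Prop := EqvGen Beta
def BetaEta : Term → Term → Prop := fun a b => Beta a b ∨ Eta a b
def BetaEtaConv : Term → Term → Prop := EqvGen BetaEta

def BetaEtaRed : Term → Term → Prop := ReflTransGen BetaEta

/-- `appList h [a₁,…,aₙ] = h a₁ … aₙ`. -/
def appList (h : Term) (args : List Term) : Term := args.foldl Term.app h
/-- `lamList [y₁,…,yₙ] M = λ y₁ … yₙ. M`. -/
def lamList (xs : List ℕ) (body : Term) : Term := xs.foldr Term.lam body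

/-- β-normal finite hereditary permutators:
`λ x y₁ … yₙ. x (P₁ y_{π(1)}) … (Pₙ y_{π(n)})` with each `Pᵢ` an FHP. -/
inductive FHPnf : Term → Prop
  | mk (x : ℕ) (ys : List ℕ) (Ps : List Term) (π : Equiv.Perm (Fin ys.length))
      (hlen : Ps.length = ys.length)
      (hx : x ∉ ys) (hnd : ys.Nodup)
      (hPs : ∀ P ∈ Ps, FHPnf P) :
      FHPnf (Term.lam x (lamList ys (appList (Term.var x)
        (List.ofFn fun i : Fin ys.length =>
          Term.app (Ps.get (Fin.cast hlen.symm i)) (Term.var (ys.get (π i)))))))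

/-- Finite hereditary permutators (modulo β-conversion). -/
def FHP (M : Term) : Prop := ∃ N, BetaConv M N ∧ FHPnf N

/-- β-normal finite hereditary identities:
`λ x y₁ … yₙ. x (Id₁ y₁) … (Idₙ yₙ)` with each `Idᵢ` an FHI. -/
inductive FHInf : Term → Prop
  | mk (x : ℕ) (ys : List ℕ) (Ids : List Term)
      (hlen : Ids.length = ys.length)
      (hx : x ∉ ys) (hnd : ys.Nodup)
      (hIds : ∀ P ∈ Ids, FHInf P) :
      FHInf (Term.lam x (lamList ys (appList (Term.var x)
        (List.ofFn fun i : Fin ys.length =>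
          Term.app (Ids.get (Fin.cast hlen.symm i)) (Term.var (ys.get i))))))

/-- Finite hereditary identities (modulo β-conversion). -/
def FHI (M : Term) : Prop := ∃ N, BetaConv M N ∧ FHInf N

/-- Types with atoms, ω, arrow, intersection and union. -/
inductive Ty : Type
  | atom : ℕ → Ty
  | omega : Ty
  | arr : Ty → Ty → Ty
  | and : Ty → Ty → Ty
  | or : Ty → Ty → Ty
deriving DecidableEq

/-- Semantic type equivalence `≅`: the least congruence with
`φ ≅ ω→φ`, `ω ≅ ω→ω`, `σ ≅ σ∧ω ≅ ω∧σ`, `ω ≅ σ∨ω ≅ ω∨σ`. -/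
inductive SemEq : Ty → Ty → Prop
  | refl (σ) : SemEq σ σ
  | symm : SemEq σ τ → SemEq τ σ
  | trans : SemEq σ τ → SemEq τ ρ → SemEq σ ρ
  | arr : SemEq σ σ' → SemEq τ τ' → SemEq (Ty.arr σ τ) (Ty.arr σ' τ')
  | and : SemEq σ σ' → SemEq τ τ' → SemEq (Ty.and σ τ) (Ty.and σ' τ')
  | or : SemEq σ σ' → SemEq τ τ' → SemEq (Ty.or σ τ) (Ty.or σ' τ')
  | atomFun (a) : SemEq (Ty.atom a) (Ty.arr Ty.omega (Ty.atom a))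
  | omegaFun : SemEq Ty.omega (Ty.arr Ty.omega Ty.omega)
  | andOmegaR (σ) : SemEq σ (Ty.and σ Ty.omega)
  | andOmegaL (σ) : SemEq σ (Ty.and Ty.omega σ)
  | orOmegaR (σ) : SemEq Ty.omega (Ty.or σ Ty.omega)
  | orOmegaL (σ) : SemEq Ty.omega (Ty.or Ty.omega σ)

/-- Relevant environments, considered up to permutation in the rules. -/
abbrev Env := List (ℕ × Ty)

def Env.dom (Γ : Env) : List ℕ := Γ.map Prod.fst

def EnvDisj (Γ₁ Γ₂ : Env) : Prop := ∀ x, x ∈ Γ₁.dom → x ∉ Γ₂.dom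

/-- The intersection-union type assignment system for linear λ-terms (Figure 1). -/
inductive Deriv : Env → Term → Ty → Prop
  | ax (x σ) : Deriv [(x, σ)] (Term.var x) σ
  | eqv {Γ M σ τ} : Deriv Γ M σ → SemEq σ τ → Deriv Γ M τ
  | perm {Γ Γ' M σ} : Deriv Γ M σ → Γ.Perm Γ' → Deriv Γ' M σ
  | arrI {Γ x σ M τ} : Deriv ((x, σ) :: Γ) M τ → Deriv Γ (Term.lam x M) (Ty.arr σ τ)
  | arrE {Γ₁ Γ₂ M N σ τ} : Deriv Γ₁ M (Ty.arr σ τ) → Deriv Γ₂ N σ → EnvDisj Γ₁ Γ₂ →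
      Deriv (Γ₁ ++ Γ₂) (Term.app M N) τ
  | andI {Γ M σ τ} : Deriv Γ M σ → Deriv Γ M τ → Deriv Γ M (Ty.and σ τ)
  | andE₁ {Γ M σ τ} : Deriv Γ M (Ty.and σ τ) → Deriv Γ M σ
  | andE₂ {Γ M σ τ} : Deriv Γ M (Ty.and σ τ) → Deriv Γ M τ
  | orI₁ {Γ M σ τ} : Deriv Γ M σ → Deriv Γ M (Ty.or σ τ)
  | orI₂ {Γ M σ τ} : Deriv Γ M σ → Deriv Γ M (Ty.or τ σ)
  | orE {Γ₁ Γ₂ x M N σ τ ζ ρ} :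
      Deriv ((x, Ty.and σ ζ) :: Γ₁) M ρ →
      Deriv ((x, Ty.and τ ζ) :: Γ₁) M ρ →
      Deriv Γ₂ N (Ty.and (Ty.or σ τ) ζ) → EnvDisj Γ₁ Γ₂ →
      Deriv (Γ₁ ++ Γ₂) (Term.subst M x N) ρ

/-- Linear λ-terms: every free or bound variable occurs exactly once. -/
inductive Linear : Term → Prop
  | var (x) : Linear (Term.var x)
  | app {M N} : Linear M → Linear N → Disjoint (fv M) (fv N) → Linear (Term.app M N)
  | lam {x M} : Linear M → x ∈ fv M → Linear (Term.lam x M)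

/-- A variable fresh for a finite set. -/
def freshVar (s : Finset ℕ) : ℕ := (s.sup id) + 1

/-- Composition `λx. P (Q x)` with a fresh `x`. -/
def tcomp (P Q : Term) : Term :=
  Term.lam (freshVar (fv P ∪ fv Q))
    (Term.app P (Term.app Q (Term.var (freshVar (fv P ∪ fv Q)))))

/-- `P` and `Q` are inverse of each other: both compositions are βη-equal to the identity. -/
def InvPair (P Q : Term) : Prop :=
  ∃ x, BetaEtaConv (tcomp P Q) (Term.lam x (Term.var x)) ∧
       BetaEtaConv (tcomp Q P) (Term.lam x (Term.var x))

/-- Type isomorphism `σ ≈ τ`. -/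
def TyIso (σ τ : Ty) : Prop :=
  ∃ P Q, FHP P ∧ FHP Q ∧ InvPair P Q ∧
    Deriv [] P (Ty.arr σ τ) ∧ Deriv [] Q (Ty.arr τ σ)

/-- Strong type isomorphism `σ ≈ₛ τ`: proved by a finite hereditary identity. -/
def StrongIso (σ τ : Ty) : Prop :=
  ∃ Id, FHI Id ∧ Deriv [] Id (Ty.arr σ τ) ∧ Deriv [] Id (Ty.arr τ σ)

/-- The normalisation pre-order `≤` on types. -/
inductive NormLe : Ty → Ty → Prop
  | refl (σ) : NormLe σ σ
  | trans {σ τ ρ} : NormLe σ τ → NormLe τ ρ → NormLe σ ρ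
  | leOmega (σ) : NormLe σ Ty.omega
  | andE₁ (σ τ) : NormLe (Ty.and σ τ) σ
  | andE₂ (σ τ) : NormLe (Ty.and σ τ) τ
  | orI₁ (σ τ) : NormLe σ (Ty.or σ τ)
  | orI₂ (σ τ) : NormLe τ (Ty.or σ τ)
  | andI {σ τ ρ} : NormLe σ τ → NormLe σ ρ → NormLe σ (Ty.and τ ρ)
  | orE {σ τ ρ} : NormLe σ τ → NormLe ρ τ → NormLe (Ty.or σ ρ) τ
  | atomArr (a σ) : NormLe (Ty.atom a) (Ty.arr σ (Ty.atom a))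
  | omegaArr (σ) : NormLe Ty.omega (Ty.arr σ Ty.omega)
  | arr {σ σ' τ τ'} : NormLe σ' σ → NormLe τ τ' → NormLe (Ty.arr σ τ) (Ty.arr σ' τ')

/-- Inner type normalisation rules `σ ⇝ τ`. -/
inductive InnerStep : Ty → Ty → Prop
  | atomRule (a) : InnerStep (Ty.arr Ty.omega (Ty.atom a)) (Ty.atom a)
  | omegaRule {σ} : NormLe Ty.omega σ → σ ≠ Ty.omega → InnerStep σ Ty.omega
  | distArrAnd (σ τ ρ) :
      InnerStep (Ty.arr σ (Ty.and τ ρ)) (Ty.and (Ty.arr σ τ) (Ty.arr σ ρ))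
  | distAndArr (σ τ ρ ζ) :
      InnerStep (Ty.arr (Ty.and (Ty.or σ τ) ρ) ζ)
                (Ty.arr (Ty.or (Ty.and σ ρ) (Ty.and τ ρ)) ζ)
  | distOrArr (σ τ ρ) :
      InnerStep (Ty.arr (Ty.or σ τ) ρ) (Ty.and (Ty.arr σ ρ) (Ty.arr τ ρ))
  | distArrOr (σ τ ρ ζ) :
      InnerStep (Ty.arr σ (Ty.or (Ty.and τ ρ) ζ))
                (Ty.arr σ (Ty.and (Ty.or τ ζ) (Ty.or ρ ζ)))
  | eraseAnd {σ τ} : NormLe σ τ → InnerStep (Ty.and σ τ) σ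
  | eraseOr {σ τ} : NormLe σ τ → InnerStep (Ty.or σ τ) τ

/-- Type contexts. -/
inductive TyCtx : Type
  | hole : TyCtx
  | arrL : TyCtx → Ty → TyCtx
  | arrR : Ty → TyCtx → TyCtx
  | andL : TyCtx → Ty → TyCtx
  | andR : Ty → TyCtx → TyCtx
  | orL : TyCtx → Ty → TyCtx
  | orR : Ty → TyCtx → TyCtx

/-- Filling the hole of a type context. -/
def TyCtx.fill : TyCtx → Ty → Ty
  | TyCtx.hole, τ => τ
  | TyCtx.arrL C σ, τ => Ty.arr (C.fill τ) σ
  | TyCtx.arrR σ C, τ => Ty.arr σ (C.fill τ)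
  | TyCtx.andL C σ, τ => Ty.and (C.fill τ) σ
  | TyCtx.andR σ C, τ => Ty.and σ (C.fill τ)
  | TyCtx.orL C σ, τ => Ty.or (C.fill τ) σ
  | TyCtx.orR σ C, τ => Ty.or σ (C.fill τ)

/-- Top normalisation rules `σ ⟹ τ`: contextual closure of the inner rules,
plus `(σ∧τ)∨ρ ⟹ (σ∨ρ)∧(τ∨ρ)` at the top or in right-hand sides of arrows. -/
inductive TopStep : Ty → Ty → Prop
  | ctx {σ τ} (C : TyCtx) : InnerStep σ τ → TopStep (C.fill σ) (C.fill τ)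
  | dist (σ τ ρ) :
      TopStep (Ty.or (Ty.and σ τ) ρ) (Ty.and (Ty.or σ ρ) (Ty.or τ ρ))
  | arrR {τ τ'} (σ) : TopStep τ τ' → TopStep (Ty.arr σ τ) (Ty.arr σ τ')

open Classical in
/-- The normal form of a type w.r.t. the top normalisation rules. -/
noncomputable def nf (σ : Ty) : Ty :=
  if h : ∃ ν, Relation.ReflTransGen TopStep σ ν ∧ ∀ ρ, ¬ TopStep ν ρ then h.choose else σ

/-- `mkArrow [ξ₁,…,ξₙ] μ = ξ₁ → … → ξₙ → μ`. -/
def mkArrow (args : List Ty) (res : Ty) : Ty := args.foldr Ty.arr res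

/-- Similarity between sequences of normal types. -/
inductive TySim : List Ty → List Ty → Prop
  | refl (l) : TySim l l
  | symm {l r} : TySim l r → TySim r l
  | trans {l r s} : TySim l r → TySim r s → TySim l s
  | mergeAnd (l₁ l₂ r₁ r₂ : List Ty) (η₁ η₂ θ₁ θ₂ : Ty) :
      l₁.length = r₁.length →
      TySim (l₁ ++ η₁ :: η₂ :: l₂) (r₁ ++ θ₁ :: θ₂ :: r₂) →
      TySim (l₁ ++ nf (Ty.and η₁ η₂) :: l₂) (r₁ ++ nf (Ty.and θ₁ θ₂) :: r₂)
  | mergeOr (l₁ l₂ r₁ r₂ : List Ty) (η₁ η₂ θ₁ θ₂ : Ty) :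
      l₁.length = r₁.length →
      TySim (l₁ ++ η₁ :: η₂ :: l₂) (r₁ ++ θ₁ :: θ₂ :: r₂) →
      TySim (l₁ ++ nf (Ty.or η₁ η₂) :: l₂) (r₁ ++ nf (Ty.or θ₁ θ₂) :: r₂)
  | arrow (m n : ℕ) (ξ χ : Fin n → Fin m → Ty) (μ ν : Fin m → Ty)
      (π : Equiv.Perm (Fin n)) :
      (∀ i, TySim (List.ofFn (ξ i)) (List.ofFn (χ i))) →
      TySim (List.ofFn μ) (List.ofFn ν) →
      TySim (List.ofFn fun j => nf (mkArrow (List.ofFn fun i => ξ i j) (μ j)))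
            (List.ofFn fun j => nf (mkArrow (List.ofFn fun i => χ (π i) j) (ν j)))


/-! ### Auxiliary syntactic material -/

/-- All variables occurring in a term (free or bound, including binders). -/
def allV : Term → Finset ℕ
  | Term.var x => {x}
  | Term.app M N => allV M ∪ allV N
  | Term.lam x M => insert x (allV M)

/-- Number of free occurrences of a variable. -/
def cnt : Term → ℕ → ℕ
  | Term.var y, x => if y = x then 1 else 0
  | Term.app M N, x => cnt M x + cnt N x
  | Term.lam y M, x => if y = x then 0 else cnt M x

theorem fv_subset_allV : ∀ M : Term, fv M ⊆ allV M := by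
  intro M; induction M with
  | var x => simp [fv, allV]
  | app M N ihM ihN =>
      simp only [fv, allV]
      exact Finset.union_subset_union ihM ihN
  | lam x M ih =>
      simp only [fv, allV]
      intro v hv
      simp only [Finset.mem_sdiff, Finset.mem_singleton] at hv
      exact Finset.mem_insert_of_mem (ih hv.1)

theorem cnt_pos_iff_mem_fv : ∀ (M : Term) (x : ℕ), 0 < cnt M x ↔ x ∈ fv M := by
  intro M x; induction M with
  | var y =>
      rcases eq_or_ne y x with h|h
      · simp [cnt, fv, h]
      · simp [cnt, fv, h, Ne.symm h]
  | app M N ihM ihN =>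
      simp only [cnt, fv, Finset.mem_union, ← ihM, ← ihN]
      omega
  | lam y M ih =>
      by_cases h : y = x
      · simp [cnt, fv, h]
      · simp [cnt, fv, h, ih]
        intro _; exact fun h' => h h'.symm

theorem cnt_eq_zero_iff_not_mem_fv (M : Term) (x : ℕ) : cnt M x = 0 ↔ x ∉ fv M := by
  rw [← cnt_pos_iff_mem_fv]; omega

theorem subst_of_not_mem_fv : ∀ {M : Term} {x : ℕ} (N : Term), x ∉ fv M → subst M x N = M := by
  intro M; induction M with
  | var y => intro x N h; simp [fv] at h; simp [subst, Ne.symm h]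
  | app M₁ M₂ ih1 ih2 =>
      intro x N h; simp [fv] at h; simp [subst, ih1 N h.1, ih2 N h.2]
  | lam y M ih =>
      intro x N h
      by_cases hyx : y = x
      · simp [subst, hyx]
      · simp only [fv, Finset.mem_sdiff, Finset.mem_singleton] at h
        have hx : x ∉ fv M := fun hm => h ⟨hm, hyx ∘ Eq.symm⟩
        simp [subst, hyx, ih N hx]

theorem mem_fv_subst : ∀ {M : Term} {x v : ℕ} {N : Term},
    v ∈ fv (subst M x N) → (v ∈ fv M ∧ v ≠ x) ∨ v ∈ fv N := by
  intro M; induction M with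
  | var y =>
      intro x v N h
      by_cases hyx : y = x
      · simp [subst, hyx] at h; exact Or.inr h
      · simp [subst, hyx, fv] at h; subst h; simp [fv, hyx]
  | app M₁ M₂ ih1 ih2 =>
      intro x v N h
      simp only [subst, fv, Finset.mem_union] at h ⊢
      rcases h with h | h
      · rcases ih1 h with h | h <;> tauto
      · rcases ih2 h with h | h <;> tauto
  | lam y M ih =>
      intro x v N h
      by_cases hyx : y = x
      · subst hyx
        simp only [subst, if_pos rfl, ↓reduceIte] at h
        simp only [fv, Finset.mem_sdiff, Finset.mem_singleton] at h
        refine Or.inl ⟨?_, h.2⟩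
        simp only [fv, Finset.mem_sdiff, Finset.mem_singleton]
        exact ⟨h.1, h.2⟩
      · simp only [subst, if_neg hyx, fv, Finset.mem_sdiff, Finset.mem_singleton] at h
        rcases ih h.1 with h' | h'
        · refine Or.inl ⟨?_, h'.2⟩
          simp only [fv, Finset.mem_sdiff, Finset.mem_singleton]
          exact ⟨h'.1, h.2⟩
        · exact Or.inr h'

theorem fv_subset_fv_subst : ∀ {M : Term} {x v : ℕ} (N : Term),
    v ∈ fv M → v ≠ x → v ∈ fv (subst M x N) := by
  intro M; induction M with
  | var y => intro x v N h hvx; simp [fv] at h; subst h; simp [subst, hvx, fv]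
  | app M₁ M₂ ih1 ih2 =>
      intro x v N h hvx
      simp only [fv, subst, Finset.mem_union] at h ⊢
      rcases h with h | h
      · exact Or.inl (ih1 N h hvx)
      · exact Or.inr (ih2 N h hvx)
  | lam y M ih =>
      intro x v N h hvx
      simp only [fv, Finset.mem_sdiff, Finset.mem_singleton] at h
      by_cases hyx : y = x
      · simp [subst, hyx, fv]; tauto
      · simp only [subst, if_neg hyx, fv, Finset.mem_sdiff, Finset.mem_singleton]
        exact ⟨ih N h.1 hvx, h.2⟩

theorem not_mem_fv_subst_self : ∀ {M : Term} {x : ℕ} {N : Term},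
    x ∉ fv N → x ∉ fv (subst M x N) := by
  intro M x N hN h
  rcases mem_fv_subst h with h' | h'
  · exact h'.2 rfl
  · exact hN h'

theorem allV_subst_subset : ∀ {M : Term} (x : ℕ) (N : Term),
    allV (subst M x N) ⊆ allV M ∪ allV N := by
  intro M; induction M with
  | var y =>
      intro x N
      by_cases h : y = x <;> simp [subst, h, allV]
  | app M₁ M₂ ih1 ih2 =>
      intro x N
      simp only [subst, allV]
      intro v hv
      rcases Finset.mem_union.1 hv with h | h
      · rcases Finset.mem_union.1 (ih1 x N h) with h'|h'
        · exact Finset.mem_union_left _ (Finset.mem_union_left _ h')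
        · exact Finset.mem_union_right _ h'
      · rcases Finset.mem_union.1 (ih2 x N h) with h'|h'
        · exact Finset.mem_union_left _ (Finset.mem_union_right _ h')
        · exact Finset.mem_union_right _ h'
  | lam y M ih =>
      intro x N
      by_cases h : y = x
      · simp only [subst, if_pos h, allV]
        intro v hv
        exact Finset.mem_union_left _ hv
      · simp only [subst, if_neg h, allV]
        intro v hv
        rcases Finset.mem_insert.1 hv with h' | h'
        · simp [allV, h']
        · have := ih x N h'
          rw [Finset.mem_union] at this
          rcases this with h'' | h''
          · exact Finset.mem_union_left _ (Finset.mem_insert_of_mem h'')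
          · exact Finset.mem_union_right _ h''

theorem allV_subset_allV_subst : ∀ {M : Term} {x v : ℕ} (N : Term),
    v ∈ allV M → v ≠ x → v ∈ allV (subst M x N) := by
  intro M; induction M with
  | var y =>
      intro x v N h hvx
      simp [allV] at h; subst h
      simp [subst, hvx, allV]
  | app M₁ M₂ ih1 ih2 =>
      intro x v N h hvx
      simp only [allV, Finset.mem_union] at h
      simp only [subst, allV, Finset.mem_union]
      rcases h with h | h
      · exact Or.inl (ih1 N h hvx)
      · exact Or.inr (ih2 N h hvx)
  | lam y M ih =>
      intro x v N h hvx
      simp only [allV, Finset.mem_insert] at h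
      by_cases hyx : y = x
      · simp only [subst, if_pos hyx, allV, Finset.mem_insert]
        exact h
      · simp only [subst, if_neg hyx, allV, Finset.mem_insert]
        rcases h with h | h
        · exact Or.inl h
        · exact Or.inr (ih N h hvx)

theorem allV_of_fv_subst : ∀ {M : Term} {x : ℕ} {N : Term} {v : ℕ},
    x ∈ fv M → v ∈ allV N → v ∈ allV (subst M x N) := by
  intro M; induction M with
  | var y =>
      intro x N v h hv
      simp [fv] at h; subst h
      simpa [subst] using hv
  | app M₁ M₂ ih1 ih2 =>
      intro x N v h hv
      simp only [fv, Finset.mem_union] at h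
      simp only [subst, allV, Finset.mem_union]
      rcases h with h | h
      · exact Or.inl (ih1 h hv)
      · exact Or.inr (ih2 h hv)
  | lam y M ih =>
      intro x N v h hv
      simp only [fv, Finset.mem_sdiff, Finset.mem_singleton] at h
      have hyx : y ≠ x := fun e => h.2 e.symm
      simp only [subst, if_neg hyx, allV, Finset.mem_insert]
      exact Or.inr (ih h.1 hv)

/-- If `y` avoids `subst M x' N` and `y ≠ z`, then `y` avoids `subst M x' (var z)`. -/
theorem allV_subst_var_avoid : ∀ {M : Term} {x' : ℕ} {N : Term} {y z : ℕ},
    y ∉ allV (subst M x' N) → y ≠ z → y ∉ allV (subst M x' (Term.var z)) := by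
  intro M; induction M with
  | var w =>
      intro x' N y z h hyz
      by_cases hw : w = x'
      · simp [subst, hw, allV, hyz]
      · simpa [subst, hw, allV] using h
  | app M₁ M₂ ih1 ih2 =>
      intro x' N y z h hyz
      simp only [subst, allV, Finset.mem_union] at h ⊢
      push_neg at h ⊢
      exact ⟨ih1 h.1 hyz, ih2 h.2 hyz⟩
  | lam w M ih =>
      intro x' N y z h hyz
      by_cases hw : w = x'
      · simpa [subst, hw] using h
      · simp only [subst, if_neg hw, allV, Finset.mem_insert] at h ⊢
        push_neg at h ⊢
        exact ⟨h.1, ih h.2 hyz⟩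

/-- counting after substitution -/
theorem cnt_subst_le : ∀ (M : Term) (a : ℕ) (N : Term) (v : ℕ),
    cnt (subst M a N) v ≤ (if v = a then 0 else cnt M v) + cnt M a * cnt N v := by
  intro M; induction M with
  | var y =>
      intro a N v
      by_cases hya : y = a
      · simp [subst, hya, cnt]
      · by_cases hvy : y = v <;> by_cases hva : v = a <;>
          simp [subst, hya, cnt, hvy, hva] <;> omega
  | app M₁ M₂ ih1 ih2 =>
      intro a N v
      have h1 := ih1 a N v
      have h2 := ih2 a N v
      by_cases hva : v = a
      · simp only [subst, cnt, if_pos hva, Nat.add_mul] at h1 h2 ⊢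
        omega
      · simp only [subst, cnt, if_neg hva, Nat.add_mul] at h1 h2 ⊢
        omega
  | lam y M ih =>
      intro a N v
      by_cases hya : y = a
      · subst hya
        simp only [subst, if_pos rfl, ↓reduceIte, cnt, if_pos rfl, Nat.zero_mul, Nat.add_zero]
        rcases eq_or_ne v y with h|h
        · simp [h]
        · simp [h, fun e : y = v => h e.symm]
      · simp only [subst, if_neg hya, cnt, if_neg hya]
        by_cases h : y = v
        · simp [h]
        · simp only [if_neg h]
          exact ih a N v

/-! ### Substitution commutation lemmas -/

theorem subst_subst_same : ∀ (M : Term) (a : ℕ) (N P : Term),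
    subst (subst M a N) a P = subst M a (subst N a P) := by
  intro M; induction M with
  | var y =>
      intro a N P
      by_cases h : y = a <;> simp [subst, h]
  | app M₁ M₂ ih1 ih2 => intro a N P; simp [subst, ih1, ih2]
  | lam y M ih =>
      intro a N P
      by_cases h : y = a <;> simp [subst, h, ih]

/-- `S3`: composing a renaming substitution with a substitution. -/
theorem subst_subst_var : ∀ {M : Term} {a y : ℕ} (N : Term),
    y ∉ allV M → subst (subst M a (Term.var y)) y N = subst M a N := by
  intro M; induction M with
  | var w =>
      intro a y N hy
      simp only [allV, Finset.mem_singleton] at hy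
      by_cases h : w = a
      · simp [subst, h]
      · simp [subst, h, Ne.symm hy]
  | app M₁ M₂ ih1 ih2 =>
      intro a y N hy
      simp only [allV, Finset.mem_union] at hy
      push_neg at hy
      simp [subst, ih1 N hy.1, ih2 N hy.2]
  | lam w M ih =>
      intro a y N hy
      simp only [allV, Finset.mem_insert] at hy
      push_neg at hy
      by_cases h : w = a
      · simp only [subst, if_pos h, if_neg (fun e : w = y => hy.1 e.symm)]
        rw [subst_of_not_mem_fv N (fun hm => hy.2 (fv_subset_allV M hm))]
      · simp only [subst, if_neg h, if_neg (fun e : w = y => hy.1 e.symm)]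
        rw [ih N hy.2]

/-- `S4`: commuting a renaming-to-`y` substitution past an unrelated substitution. -/
theorem subst_comm_var : ∀ {M : Term} {x x' y : ℕ} {N : Term},
    x ≠ x' → y ≠ x' → x ∉ fv N →
    subst (subst M x (Term.var y)) x' N = subst (subst M x' N) x (Term.var y) := by
  intro M; induction M with
  | var w =>
      intro x x' y N hxx' hyx' hxN
      by_cases h : w = x
      · subst h
        simp [subst, hxx', hyx']
      · by_cases h' : w = x'
        · subst h'
          simp [subst, h, subst_of_not_mem_fv (Term.var y) hxN]
        · simp [subst, h, h']
  | app M₁ M₂ ih1 ih2 =>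
      intro x x' y N hxx' hyx' hxN
      simp [subst, ih1 hxx' hyx' hxN, ih2 hxx' hyx' hxN]
  | lam w M ih =>
      intro x x' y N hxx' hyx' hxN
      by_cases h : w = x
      · have hwx' : ¬ w = x' := fun e => hxx' (h.symm.trans e)
        simp only [subst, if_pos h, if_neg hwx']
      · by_cases h' : w = x'
        · simp only [subst, if_neg h, if_pos h']
        · simp [subst, h, h', ih hxx' hyx' hxN]

/-- `S5`. -/
theorem subst_three : ∀ {M : Term} {x x' y z : ℕ} {N : Term},
    z ∉ allV M → z ≠ x → z ≠ y → x ≠ x' → x ∉ fv N →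
    subst (subst (subst M x' (Term.var z)) x (Term.var y)) z N
      = subst (subst M x' N) x (Term.var y) := by
  intro M; induction M with
  | var w =>
      intro x x' y z N hzM hzx hzy hxx' hxN
      simp only [allV, Finset.mem_singleton] at hzM
      by_cases h : w = x'
      · subst h
        simp [subst, hzx, subst_of_not_mem_fv (Term.var y) hxN]
      · by_cases h' : w = x
        · subst h'
          simp [subst, h, Ne.symm hzy]
        · have hwz : w ≠ z := fun e => hzM e.symm
          simp [subst, h, h', hwz]
  | app M₁ M₂ ih1 ih2 =>
      intro x x' y z N hzM hzx hzy hxx' hxN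
      simp only [allV, Finset.mem_union] at hzM
      push_neg at hzM
      simp [subst, ih1 hzM.1 hzx hzy hxx' hxN, ih2 hzM.2 hzx hzy hxx' hxN]
  | lam w M ih =>
      intro x x' y z N hzM hzx hzy hxx' hxN
      simp only [allV, Finset.mem_insert] at hzM
      push_neg at hzM
      have hwz : ¬ w = z := fun e => hzM.1 e.symm
      by_cases h : w = x'
      · have hwx : ¬ w = x := fun e => hxx' (e.symm.trans h)
        simp only [subst, if_pos h, if_neg hwx, if_neg hwz]
        congr 1
        have hz : z ∉ fv (subst M x (Term.var y)) := by
          intro hm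
          rcases mem_fv_subst hm with h1 | h1
          · exact hzM.2 (fv_subset_allV M h1.1)
          · simp only [fv, Finset.mem_singleton] at h1; exact hzy h1
        exact subst_of_not_mem_fv N hz
      · by_cases h' : w = x
        · simp only [subst, if_neg h, if_pos h', if_neg hwz]
          congr 1
          exact subst_subst_var N hzM.2
        · simp only [subst, if_neg h, if_neg h', if_neg hwz]
          congr 1
          exact ih hzM.2 hzx hzy hxx' hxN

/-- No free occurrence of `x'` under a `lam x` binder. -/
def notCapt (x x' : ℕ) : Term → Prop
  | Term.var _ => True
  | Term.app M N => notCapt x x' M ∧ notCapt x x' N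
  | Term.lam w B => if w = x' then True else if w = x then x' ∉ fv B else notCapt x x' B

theorem notCapt_of_not_mem_fv : ∀ {M : Term} {x x' : ℕ}, x' ∉ fv M → notCapt x x' M := by
  intro M; induction M with
  | var w => intro x x' h; trivial
  | app M₁ M₂ ih1 ih2 =>
      intro x x' h
      simp only [fv, Finset.mem_union] at h
      push_neg at h
      exact ⟨ih1 h.1, ih2 h.2⟩
  | lam w B ih =>
      intro x x' h
      simp only [fv, Finset.mem_sdiff, Finset.mem_singleton] at h
      push_neg at h
      by_cases hw : w = x'
      · simp [notCapt, hw]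
      · have hB : x' ∉ fv B := fun hm => hw (h hm).symm
        by_cases hw' : w = x
        · simp [notCapt, hw, hw', hB]
        · simp [notCapt, hw, hw', ih hB]

/-- `NC`: with at most one free occurrence of `x'`, a free `x` appearing after
substitution certifies that no site lies under a `lam x`. -/
theorem notCapt_of_mem_fv_subst : ∀ {M : Term} {x x' : ℕ} {N : Term},
    cnt M x' ≤ 1 → x ∉ fv M → x ∈ fv (subst M x' N) → notCapt x x' M := by
  intro M; induction M with
  | var w => intro x x' N _ _ _; trivial
  | app M₁ M₂ ih1 ih2 =>
      intro x x' N hc hx hs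
      simp only [fv, Finset.mem_union] at hx
      push_neg at hx
      simp only [cnt] at hc
      simp only [subst, fv, Finset.mem_union] at hs
      rcases hs with hs | hs
      · refine ⟨ih1 (by omega) hx.1 hs, ?_⟩
        by_cases hx'1 : x' ∈ fv M₁
        · have : 0 < cnt M₁ x' := (cnt_pos_iff_mem_fv _ _).2 hx'1
          have : cnt M₂ x' = 0 := by omega
          exact notCapt_of_not_mem_fv ((cnt_eq_zero_iff_not_mem_fv _ _).1 this)
        · rw [subst_of_not_mem_fv N hx'1] at hs
          exact absurd hs hx.1
      · refine ⟨?_, ih2 (by omega) hx.2 hs⟩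
        by_cases hx'2 : x' ∈ fv M₂
        · have : 0 < cnt M₂ x' := (cnt_pos_iff_mem_fv _ _).2 hx'2
          have : cnt M₁ x' = 0 := by omega
          exact notCapt_of_not_mem_fv ((cnt_eq_zero_iff_not_mem_fv _ _).1 this)
        · rw [subst_of_not_mem_fv N hx'2] at hs
          exact absurd hs hx.2
  | lam w B ih =>
      intro x x' N hc hx hs
      by_cases hw : w = x'
      · simp [notCapt, hw]
      · simp only [subst, if_neg hw, fv, Finset.mem_sdiff, Finset.mem_singleton] at hs
        have hxB : x ∉ fv B := by
          intro hm
          apply hx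
          simp only [fv, Finset.mem_sdiff, Finset.mem_singleton]
          exact ⟨hm, hs.2⟩
        have hwx : w ≠ x := fun e => hs.2 e.symm
        simp only [notCapt, if_neg hw, if_neg hwx]
        exact ih (by simpa [cnt, hw] using hc) hxB hs.1

/-- `S6`. -/
theorem subst_comm_notCapt : ∀ {M : Term} {x x' y : ℕ} {N : Term},
    x ≠ x' → x ∉ fv M → notCapt x x' M →
    subst M x' (subst N x (Term.var y)) = subst (subst M x' N) x (Term.var y) := by
  intro M; induction M with
  | var w =>
      intro x x' y N hxx' hx hnc
      by_cases h : w = x'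
      · simp [subst, h]
      · have hwx : w ≠ x := by simp [fv] at hx; exact fun e => hx e.symm
        simp [subst, h, hwx]
  | app M₁ M₂ ih1 ih2 =>
      intro x x' y N hxx' hx hnc
      simp only [fv, Finset.mem_union] at hx
      push_neg at hx
      exact congrArg₂ Term.app (ih1 hxx' hx.1 hnc.1) (ih2 hxx' hx.2 hnc.2)
  | lam w B ih =>
      intro x x' y N hxx' hx hnc
      by_cases h : w = x'
      · simp only [subst, if_pos h]
        have hxB : x ∉ fv B := by
          intro hm
          apply hx
          simp only [fv, Finset.mem_sdiff, Finset.mem_singleton]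
          exact ⟨hm, fun e => hxx' (h ▸ e)⟩
        rw [subst_of_not_mem_fv (Term.var y) hxB]
        simp
      · by_cases h' : w = x
        · simp only [notCapt, if_neg h, if_pos h'] at hnc
          simp only [subst, if_neg h, if_pos h',
            subst_of_not_mem_fv _ hnc, subst_of_not_mem_fv N hnc]
        · have hxB : x ∉ fv B := by
            intro hm
            apply hx
            simp only [fv, Finset.mem_sdiff, Finset.mem_singleton]
            exact ⟨hm, fun e => h' e.symm⟩
          simp only [notCapt, if_neg h, if_neg h'] at hnc
          simp only [subst, if_neg h, if_neg h']
          exact congrArg _ (ih hxx' hxB hnc)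

/-- η-reduction preserves free variables. -/
theorem Eta.fv_eq : ∀ {Q P : Term}, Eta Q P → fv Q = fv P := by
  intro Q P h
  induction h with
  | eta x M hx =>
      simp only [fv]
      ext v
      simp only [Finset.mem_sdiff, Finset.mem_union, Finset.mem_singleton]
      constructor
      · rintro ⟨h1 | h1, h2⟩
        · exact h1
        · exact absurd h1 h2
      · intro hv
        exact ⟨Or.inl hv, fun e => hx (e ▸ hv)⟩
  | appL N h ih => simp [fv, ih]
  | appR M h ih => simp [fv, ih]
  | lam x h ih => simp [fv, ih]

/-! ### Structural facts about derivations -/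

theorem Env.dom_cons (p : ℕ × Ty) (Γ : Env) : Env.dom (p :: Γ) = p.1 :: Γ.dom := rfl

theorem Env.dom_append (Γ₁ Γ₂ : Env) : Env.dom (Γ₁ ++ Γ₂) = Γ₁.dom ++ Γ₂.dom :=
  List.map_append

theorem Deriv.dom_nodup {Γ M σ} (h : Deriv Γ M σ) : Γ.dom.Nodup := by
  induction h with
  | ax x σ => simp [Env.dom]
  | eqv _ _ ih => exact ih
  | perm _ hp ih => exact ((hp.map Prod.fst).nodup_iff).1 ih
  | arrI _ ih => exact (List.nodup_cons.1 ih).2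
  | arrE _ _ hd ih1 ih2 =>
      rw [Env.dom_append]
      exact ih1.append ih2 (fun v hv hv' => hd v hv hv')
  | andI _ _ ih _ => exact ih
  | andE₁ _ ih => exact ih
  | andE₂ _ ih => exact ih
  | orI₁ _ ih => exact ih
  | orI₂ _ ih => exact ih
  | orE _ _ _ hd ih1 ih2 ih3 =>
      rw [Env.dom_append]
      exact (List.nodup_cons.1 ih1).2.append ih3 (fun v hv hv' => hd v hv hv')

theorem Deriv.fv_subset_dom {Γ M σ} (h : Deriv Γ M σ) : ∀ v ∈ fv M, v ∈ Γ.dom := by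
  induction h with
  | ax x σ => intro v hv; simp [fv] at hv; simp [Env.dom, hv]
  | eqv _ _ ih => exact ih
  | perm _ hp ih => exact fun v hv => (hp.map Prod.fst).subset (ih v hv)
  | arrI _ ih =>
      intro v hv
      simp only [fv, Finset.mem_sdiff, Finset.mem_singleton] at hv
      have := ih v hv.1
      rw [Env.dom_cons] at this
      rcases List.mem_cons.1 this with h | h
      · exact absurd h hv.2
      · exact h
  | arrE _ _ hd ih1 ih2 =>
      intro v hv
      rw [Env.dom_append, List.mem_append]
      simp only [fv, Finset.mem_union] at hv
      rcases hv with h | h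
      · exact Or.inl (ih1 v h)
      · exact Or.inr (ih2 v h)
  | andI _ _ ih _ => exact ih
  | andE₁ _ ih => exact ih
  | andE₂ _ ih => exact ih
  | orI₁ _ ih => exact ih
  | orI₂ _ ih => exact ih
  | orE _ _ _ hd ih1 ih2 ih3 =>
      intro v hv
      rw [Env.dom_append, List.mem_append]
      rcases mem_fv_subst hv with h | h
      · have := ih1 v h.1
        rw [Env.dom_cons] at this
        rcases List.mem_cons.1 this with h' | h'
        · exact absurd h' h.2
        · exact Or.inl h'
      · exact Or.inr (ih3 v h)

theorem Deriv.cnt_le {Γ M σ} (h : Deriv Γ M σ) : ∀ v, cnt M v ≤ Γ.dom.count v := by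
  induction h with
  | ax x σ =>
      intro v
      rcases eq_or_ne v x with h|h
      · simp [cnt, Env.dom, h]
      · simp [cnt, Env.dom, h, Ne.symm h]
  | eqv _ _ ih => exact ih
  | perm _ hp ih =>
      intro v
      have hcp : List.count v _ = List.count v _ := ((hp.map Prod.fst).count_eq v)
      exact le_of_le_of_eq (ih v) hcp
  | arrI _ ih =>
      intro v
      rename_i Γ x σ M τ _
      by_cases hvx : v = x
      · simp [cnt, hvx]
      · have := ih v
        rw [Env.dom_cons, List.count_cons] at this
        simp only [beq_iff_eq, if_neg (fun e : x = v => hvx e.symm)] at this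
        simp only [cnt, if_neg (fun e : x = v => hvx e.symm)]
        omega
  | arrE _ _ hd ih1 ih2 =>
      intro v
      rw [Env.dom_append, List.count_append]
      simp only [cnt]
      exact Nat.add_le_add (ih1 v) (ih2 v)
  | andI _ _ ih _ => exact ih
  | andE₁ _ ih => exact ih
  | andE₂ _ ih => exact ih
  | orI₁ _ ih => exact ih
  | orI₂ _ ih => exact ih
  | orE h1 h2 h3 hd ih1 ih2 ih3 =>
      intro v
      rename_i Γ₁ Γ₂ x M N σ τ ζ ρ
      rw [Env.dom_append, List.count_append]
      have hnd := h1.dom_nodup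
      rw [Env.dom_cons] at hnd
      have hxΓ₁ : List.count x (Env.dom Γ₁) = 0 :=
        List.count_eq_zero.2 (List.nodup_cons.1 hnd).1
      have hMx : cnt M x ≤ 1 := by
        have := ih1 x
        rw [Env.dom_cons, List.count_cons] at this
        simpa [hxΓ₁] using this
      have key := cnt_subst_le M x N v
      have h5 : cnt M x * cnt N v ≤ cnt N v := by
        calc cnt M x * cnt N v ≤ 1 * cnt N v := Nat.mul_le_mul_right _ hMx
        _ = cnt N v := Nat.one_mul _
      have h6 := ih3 v
      by_cases hvx : v = x
      · rw [if_pos hvx] at key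
        omega
      · rw [if_neg hvx] at key
        have h4 : cnt M v ≤ List.count v (Env.dom Γ₁) := by
          have := ih1 v
          rw [Env.dom_cons, List.count_cons] at this
          have hxv : ¬ x = v := fun e => hvx e.symm
          simpa [beq_iff_eq, hxv] using this
        omega

theorem Deriv.cnt_head_le_one {Γ₁ : Env} {x : ℕ} {β : Ty} {M ρ}
    (h : Deriv ((x, β) :: Γ₁) M ρ) : cnt M x ≤ 1 := by
  have hnd := h.dom_nodup
  rw [Env.dom_cons] at hnd
  have := h.cnt_le x
  rw [Env.dom_cons, List.count_cons] at this
  have h0 : Γ₁.dom.count x = 0 := List.count_eq_zero.2 (List.nodup_cons.1 hnd).1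
  simp [h0] at this
  omega

theorem Deriv.head_not_mem_dom {Γ₁ : Env} {x : ℕ} {β : Ty} {M ρ}
    (h : Deriv ((x, β) :: Γ₁) M ρ) : x ∉ Γ₁.dom := by
  have hnd := h.dom_nodup
  rw [Env.dom_cons] at hnd
  exact (List.nodup_cons.1 hnd).1

/-! ### Size-indexed derivations -/

inductive DerivN : ℕ → Env → Term → Ty → Prop
  | ax (n x σ) : DerivN n [(x, σ)] (Term.var x) σ
  | eqv {n Γ M σ τ} : DerivN n Γ M σ → SemEq σ τ → DerivN (n+1) Γ M τ
  | perm {n Γ Γ' M σ} : DerivN n Γ M σ → Γ.Perm Γ' → DerivN (n+1) Γ' M σ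
  | arrI {n Γ x σ M τ} : DerivN n ((x, σ) :: Γ) M τ → DerivN (n+1) Γ (Term.lam x M) (Ty.arr σ τ)
  | arrE {n Γ₁ Γ₂ M N σ τ} : DerivN n Γ₁ M (Ty.arr σ τ) → DerivN n Γ₂ N σ → EnvDisj Γ₁ Γ₂ →
      DerivN (n+1) (Γ₁ ++ Γ₂) (Term.app M N) τ
  | andI {n Γ M σ τ} : DerivN n Γ M σ → DerivN n Γ M τ → DerivN (n+1) Γ M (Ty.and σ τ)
  | andE₁ {n Γ M σ τ} : DerivN n Γ M (Ty.and σ τ) → DerivN (n+1) Γ M σ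
  | andE₂ {n Γ M σ τ} : DerivN n Γ M (Ty.and σ τ) → DerivN (n+1) Γ M τ
  | orI₁ {n Γ M σ τ} : DerivN n Γ M σ → DerivN (n+1) Γ M (Ty.or σ τ)
  | orI₂ {n Γ M σ τ} : DerivN n Γ M σ → DerivN (n+1) Γ M (Ty.or τ σ)
  | orE {n Γ₁ Γ₂ x M N σ τ ζ ρ} :
      DerivN n ((x, Ty.and σ ζ) :: Γ₁) M ρ →
      DerivN n ((x, Ty.and τ ζ) :: Γ₁) M ρ →
      DerivN n Γ₂ N (Ty.and (Ty.or σ τ) ζ) → EnvDisj Γ₁ Γ₂ →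
      DerivN (n+1) (Γ₁ ++ Γ₂) (Term.subst M x N) ρ

theorem DerivN.toDeriv : ∀ {n Γ M σ}, DerivN n Γ M σ → Deriv Γ M σ := by
  intro n Γ M σ h
  induction h with
  | ax n x σ => exact Deriv.ax x σ
  | eqv _ he ih => exact Deriv.eqv ih he
  | perm _ hp ih => exact Deriv.perm ih hp
  | arrI _ ih => exact Deriv.arrI ih
  | arrE _ _ hd ih1 ih2 => exact Deriv.arrE ih1 ih2 hd
  | andI _ _ ih1 ih2 => exact Deriv.andI ih1 ih2
  | andE₁ _ ih => exact Deriv.andE₁ ih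
  | andE₂ _ ih => exact Deriv.andE₂ ih
  | orI₁ _ ih => exact Deriv.orI₁ ih
  | orI₂ _ ih => exact Deriv.orI₂ ih
  | orE _ _ _ hd ih1 ih2 ih3 => exact Deriv.orE ih1 ih2 ih3 hd

theorem DerivN.succ : ∀ {n Γ M σ}, DerivN n Γ M σ → DerivN (n+1) Γ M σ := by
  intro n Γ M σ h
  induction h with
  | ax n x σ => exact DerivN.ax _ x σ
  | eqv _ he ih => exact DerivN.eqv ih he
  | perm _ hp ih => exact DerivN.perm ih hp
  | arrI _ ih => exact DerivN.arrI ih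
  | arrE _ _ hd ih1 ih2 => exact DerivN.arrE ih1 ih2 hd
  | andI _ _ ih1 ih2 => exact DerivN.andI ih1 ih2
  | andE₁ _ ih => exact DerivN.andE₁ ih
  | andE₂ _ ih => exact DerivN.andE₂ ih
  | orI₁ _ ih => exact DerivN.orI₁ ih
  | orI₂ _ ih => exact DerivN.orI₂ ih
  | orE _ _ _ hd ih1 ih2 ih3 => exact DerivN.orE ih1 ih2 ih3 hd

theorem DerivN.mono : ∀ {n m Γ M σ}, DerivN n Γ M σ → n ≤ m → DerivN m Γ M σ := by
  intro n m Γ M σ h hle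
  induction hle with
  | refl => exact h
  | step _ ih => exact ih.succ

theorem Deriv.toDerivN : ∀ {Γ M σ}, Deriv Γ M σ → ∃ n, DerivN n Γ M σ := by
  intro Γ M σ h
  induction h with
  | ax x σ => exact ⟨0, DerivN.ax 0 x σ⟩
  | eqv _ he ih => obtain ⟨n, hn⟩ := ih; exact ⟨n+1, DerivN.eqv hn he⟩
  | perm _ hp ih => obtain ⟨n, hn⟩ := ih; exact ⟨n+1, DerivN.perm hn hp⟩
  | arrI _ ih => obtain ⟨n, hn⟩ := ih; exact ⟨n+1, DerivN.arrI hn⟩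
  | arrE _ _ hd ih1 ih2 =>
      obtain ⟨n1, h1⟩ := ih1; obtain ⟨n2, h2⟩ := ih2
      exact ⟨max n1 n2 + 1,
        DerivN.arrE (h1.mono (le_max_left _ _)) (h2.mono (le_max_right _ _)) hd⟩
  | andI _ _ ih1 ih2 =>
      obtain ⟨n1, h1⟩ := ih1; obtain ⟨n2, h2⟩ := ih2
      exact ⟨max n1 n2 + 1,
        DerivN.andI (h1.mono (le_max_left _ _)) (h2.mono (le_max_right _ _))⟩
  | andE₁ _ ih => obtain ⟨n, hn⟩ := ih; exact ⟨n+1, DerivN.andE₁ hn⟩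
  | andE₂ _ ih => obtain ⟨n, hn⟩ := ih; exact ⟨n+1, DerivN.andE₂ hn⟩
  | orI₁ _ ih => obtain ⟨n, hn⟩ := ih; exact ⟨n+1, DerivN.orI₁ hn⟩
  | orI₂ _ ih => obtain ⟨n, hn⟩ := ih; exact ⟨n+1, DerivN.orI₂ hn⟩
  | orE _ _ _ hd ih1 ih2 ih3 =>
      obtain ⟨n1, h1⟩ := ih1; obtain ⟨n2, h2⟩ := ih2; obtain ⟨n3, h3⟩ := ih3
      exact ⟨max (max n1 n2) n3 + 1,
        DerivN.orE (h1.mono (le_trans (le_max_left _ _) (le_max_left _ _)))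
          (h2.mono (le_trans (le_max_right _ _) (le_max_left _ _)))
          (h3.mono (le_max_right _ _)) hd⟩

/-! ### Variable swapping (permutative renaming) -/

def swV (a b v : ℕ) : ℕ := if v = a then b else if v = b then a else v

theorem swV_inj {a b u v : ℕ} (h : swV a b u = swV a b v) : u = v := by
  unfold swV at h
  split_ifs at h <;> omega

def swT (a b : ℕ) : Term → Term
  | Term.var x => Term.var (swV a b x)
  | Term.app M N => Term.app (swT a b M) (swT a b N)
  | Term.lam x M => Term.lam (swV a b x) (swT a b M)

theorem swT_subst (a b : ℕ) : ∀ (M : Term) (x : ℕ) (N : Term),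
    swT a b (subst M x N) = subst (swT a b M) (swV a b x) (swT a b N) := by
  intro M; induction M with
  | var y =>
      intro x N
      by_cases h : y = x
      · simp [subst, swT, h]
      · have hne : swV a b y ≠ swV a b x := fun e => h (swV_inj e)
        simp [subst, swT, h, hne]
  | app M₁ M₂ ih1 ih2 => intro x N; simp [subst, swT, ih1, ih2]
  | lam y M ih =>
      intro x N
      by_cases h : y = x
      · simp [subst, swT, h]
      · have hne : swV a b y ≠ swV a b x := fun e => h (swV_inj e)
        simp [subst, swT, h, hne, ih]

theorem swT_fixed : ∀ {M : Term} {a b : ℕ}, a ∉ allV M → b ∉ allV M → swT a b M = M := by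
  intro M; induction M with
  | var y =>
      intro a b ha hb
      simp only [allV, Finset.mem_singleton] at ha hb
      have h1 : ¬ y = a := fun e => ha e.symm
      have h2 : ¬ y = b := fun e => hb e.symm
      simp [swT, swV, h1, h2]
  | app M₁ M₂ ih1 ih2 =>
      intro a b ha hb
      simp only [allV, Finset.mem_union] at ha hb
      push_neg at ha hb
      simp [swT, ih1 ha.1 hb.1, ih2 ha.2 hb.2]
  | lam y M ih =>
      intro a b ha hb
      simp only [allV, Finset.mem_insert] at ha hb
      push_neg at ha hb
      have h1 : ¬ y = a := fun e => ha.1 e.symm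
      have h2 : ¬ y = b := fun e => hb.1 e.symm
      simp [swT, swV, h1, h2, ih ha.2 hb.2]

def envSw (a b : ℕ) (Γ : Env) : Env := Γ.map (fun p => (swV a b p.1, p.2))

theorem envSw_dom (a b : ℕ) (Γ : Env) :
    Env.dom (envSw a b Γ) = Γ.dom.map (swV a b) := by
  simp [envSw, Env.dom, List.map_map]

theorem envSw_of_not_mem {a b : ℕ} {Γ : Env} (ha : a ∉ Γ.dom) (hb : b ∉ Γ.dom) :
    envSw a b Γ = Γ := by
  induction Γ with
  | nil => rfl
  | cons p Γ ih =>
      rw [Env.dom_cons] at ha hb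
      simp only [List.mem_cons] at ha hb
      push_neg at ha hb
      have hfix : swV a b p.1 = p.1 := by
        have h1 : ¬ p.1 = a := fun e => ha.1 e.symm
        have h2 : ¬ p.1 = b := fun e => hb.1 e.symm
        simp [swV, h1, h2]
      show (swV a b p.1, p.2) :: envSw a b Γ = p :: Γ
      rw [hfix, ih ha.2 hb.2]

theorem DerivN.swap {a b : ℕ} : ∀ {n Γ M σ}, DerivN n Γ M σ →
    DerivN n (envSw a b Γ) (swT a b M) σ := by
  intro n Γ M σ h
  induction h with
  | ax n x σ => exact DerivN.ax n (swV a b x) σ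
  | eqv _ he ih => exact DerivN.eqv ih he
  | perm _ hp ih => exact DerivN.perm ih (hp.map _)
  | arrI _ ih => exact DerivN.arrI ih
  | arrE _ _ hd ih1 ih2 =>
      rw [show envSw a b (_ ++ _) = envSw a b _ ++ envSw a b _ from List.map_append]
      refine DerivN.arrE ih1 ih2 ?_
      intro v hv hv'
      rw [envSw_dom] at hv hv'
      rcases List.mem_map.1 hv with ⟨u, hu, rfl⟩
      rcases List.mem_map.1 hv' with ⟨u', hu', he⟩
      exact hd u hu (swV_inj he ▸ hu')
  | andI _ _ ih1 ih2 => exact DerivN.andI ih1 ih2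
  | andE₁ _ ih => exact DerivN.andE₁ ih
  | andE₂ _ ih => exact DerivN.andE₂ ih
  | orI₁ _ ih => exact DerivN.orI₁ ih
  | orI₂ _ ih => exact DerivN.orI₂ ih
  | orE _ _ _ hd ih1 ih2 ih3 =>
      rw [show envSw a b (_ ++ _) = envSw a b _ ++ envSw a b _ from List.map_append,
        swT_subst]
      refine DerivN.orE ih1 ih2 ih3 ?_
      intro v hv hv'
      rw [envSw_dom] at hv hv'
      rcases List.mem_map.1 hv with ⟨u, hu, rfl⟩
      rcases List.mem_map.1 hv' with ⟨u', hu', he⟩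
      exact hd u hu (swV_inj he ▸ hu')

/-! ### Renaming a single environment entry -/

def envRen (x y : ℕ) (Γ : Env) : Env :=
  Γ.map (fun p => if p.1 = x then (y, p.2) else p)

theorem envRen_of_not_mem {x y : ℕ} {Γ : Env} (hx : x ∉ Γ.dom) : envRen x y Γ = Γ := by
  induction Γ with
  | nil => rfl
  | cons p Γ ih =>
      rw [Env.dom_cons] at hx
      simp only [List.mem_cons] at hx
      push_neg at hx
      simp only [envRen, List.map_cons, if_neg (fun e : p.1 = x => hx.1 e.symm)]
      simp only [envRen] at ih
      rw [ih hx.2]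

theorem envRen_append (x y : ℕ) (Γ₁ Γ₂ : Env) :
    envRen x y (Γ₁ ++ Γ₂) = envRen x y Γ₁ ++ envRen x y Γ₂ := List.map_append

theorem envRen_cons (x y : ℕ) (p : ℕ × Ty) (Γ : Env) :
    envRen x y (p :: Γ) = (if p.1 = x then (y, p.2) else p) :: envRen x y Γ := rfl

theorem mem_dom_envRen {x y v : ℕ} {Γ : Env} (h : v ∈ Env.dom (envRen x y Γ)) :
    v = y ∨ (v ∈ Γ.dom ∧ v ≠ x) := by
  induction Γ with
  | nil => simp [envRen, Env.dom] at h
  | cons p Γ ih =>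
      rw [envRen_cons, Env.dom_cons, List.mem_cons] at h
      rcases h with h | h
      · by_cases hp : p.1 = x
        · rw [if_pos hp] at h
          exact Or.inl h
        · rw [if_neg hp] at h
          refine Or.inr ⟨?_, h ▸ hp⟩
          rw [Env.dom_cons, h]
          exact List.mem_cons_self
      · rcases ih h with h' | h'
        · exact Or.inl h'
        · exact Or.inr ⟨by rw [Env.dom_cons]; exact List.mem_cons_of_mem _ h'.1, h'.2⟩

theorem EnvDisj_renL {x y : ℕ} {Γ₁ Γ₂ : Env} (hd : EnvDisj Γ₁ Γ₂) (hy : y ∉ Γ₂.dom) :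
    EnvDisj (envRen x y Γ₁) Γ₂ := by
  intro v hv hv'
  rcases mem_dom_envRen hv with h | h
  · exact hy (h ▸ hv')
  · exact hd v h.1 hv'

theorem EnvDisj_renR {x y : ℕ} {Γ₁ Γ₂ : Env} (hd : EnvDisj Γ₁ Γ₂) (hy : y ∉ Γ₁.dom) :
    EnvDisj Γ₁ (envRen x y Γ₂) := by
  intro v hv hv'
  rcases mem_dom_envRen hv' with h | h
  · exact hy (h ▸ hv)
  · exact hd v hv h.1

/-! ### Root η-expansion -/

theorem freshVar_not_mem (s : Finset ℕ) : freshVar s ∉ s := by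
  intro h
  have := Finset.le_sup (f := id) h
  simp only [id] at this
  simp only [freshVar] at this
  omega

theorem eta_expand_var : ∀ (σ : Ty) {y x : ℕ} {σ' : Ty}, y ≠ x →
    Deriv [(y, σ')] (Term.var y) σ →
    Deriv [(y, σ')] (Term.lam x (Term.app (Term.var y) (Term.var x))) σ := by
  have harr : ∀ {y x : ℕ} {σ' α β : Ty}, y ≠ x →
      Deriv [(y, σ')] (Term.var y) (Ty.arr α β) →
      Deriv [(y, σ')] (Term.lam x (Term.app (Term.var y) (Term.var x))) (Ty.arr α β) := by
    intro y x σ' α β hyx h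
    have hd : EnvDisj [(y, σ')] [(x, α)] := by
      intro v hv hv'
      simp [Env.dom] at hv hv'
      exact hyx (hv ▸ hv' ▸ rfl)
    have happ : Deriv ([(y, σ')] ++ [(x, α)]) (Term.app (Term.var y) (Term.var x)) β :=
      Deriv.arrE h (Deriv.ax x α) hd
    have hperm : Deriv ((x, α) :: [(y, σ')]) (Term.app (Term.var y) (Term.var x)) β := by
      refine Deriv.perm happ ?_
      exact List.Perm.swap _ _ _
    exact Deriv.arrI hperm
  intro σ
  induction σ with
  | atom a =>
      intro y x σ' hyx h
      have h' := Deriv.eqv h (SemEq.atomFun a)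
      exact Deriv.eqv (harr hyx h') (SemEq.symm (SemEq.atomFun a))
  | omega =>
      intro y x σ' hyx h
      have h' := Deriv.eqv h SemEq.omegaFun
      exact Deriv.eqv (harr hyx h') (SemEq.symm SemEq.omegaFun)
  | arr α β _ _ =>
      intro y x σ' hyx h
      exact harr hyx h
  | and σ₁ σ₂ ih1 ih2 =>
      intro y x σ' hyx h
      exact Deriv.andI (ih1 hyx (Deriv.andE₁ h)) (ih2 hyx (Deriv.andE₂ h))
  | or σ₁ σ₂ ih1 ih2 =>
      intro y x σ' hyx h
      have hz1 : (x + y + 1 : ℕ) ≠ x := by omega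
      set z : ℕ := x + y + 1 with hzdef
      have P1 : Deriv [(z, Ty.and σ₁ Ty.omega)]
          (Term.lam x (Term.app (Term.var z) (Term.var x))) (Ty.or σ₁ σ₂) :=
        Deriv.orI₁ (ih1 hz1 (Deriv.andE₁ (Deriv.ax z _)))
      have P2 : Deriv [(z, Ty.and σ₂ Ty.omega)]
          (Term.lam x (Term.app (Term.var z) (Term.var x))) (Ty.or σ₁ σ₂) :=
        Deriv.orI₂ (ih2 hz1 (Deriv.andE₁ (Deriv.ax z _)))
      have P3 : Deriv [(y, σ')] (Term.var y) (Ty.and (Ty.or σ₁ σ₂) Ty.omega) :=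
        Deriv.andI h (Deriv.andE₂ (Deriv.eqv h (SemEq.andOmegaR _)))
      have hd : EnvDisj [] [(y, σ')] := by intro v hv; simp [Env.dom] at hv
      have hres := Deriv.orE (Γ₁ := []) P1 P2 P3 hd
      have hxz : ¬ x = z := fun e => hz1 e.symm
      have hsub : Term.subst (Term.lam x (Term.app (Term.var z) (Term.var x))) z (Term.var y)
          = Term.lam x (Term.app (Term.var y) (Term.var x)) := by
        simp [subst, hxz]
      rw [hsub] at hres
      exact hres

/-- Root η-expansion: if `Γ ⊢ M : σ` and `x ∉ fv M`, then `Γ ⊢ λx. M x : σ`. -/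
theorem eta_expand {Γ M σ} (h : Deriv Γ M σ) {x : ℕ} (hx : x ∉ fv M) :
    Deriv Γ (Term.lam x (Term.app M (Term.var x))) σ := by
  have hyx : (x + 1 : ℕ) ≠ x := by omega
  set y : ℕ := x + 1 with hydef
  have P1 : Deriv [(y, Ty.and Ty.omega σ)]
      (Term.lam x (Term.app (Term.var y) (Term.var x))) σ :=
    eta_expand_var σ hyx (Deriv.andE₂ (Deriv.ax y _))
  have homega : Deriv Γ M Ty.omega := Deriv.andE₂ (Deriv.eqv h (SemEq.andOmegaR σ))
  have P3 : Deriv Γ M (Ty.and (Ty.or Ty.omega Ty.omega) σ) :=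
    Deriv.andI (Deriv.orI₁ homega) h
  have hd : EnvDisj [] Γ := by intro v hv; simp [Env.dom] at hv
  have hres := Deriv.orE (Γ₁ := []) P1 P1 P3 hd
  have hsub : Term.subst (Term.lam x (Term.app (Term.var y) (Term.var x))) y M
      = Term.lam x (Term.app M (Term.var x)) := by
    have hxy : ¬ x = y := fun e => hyx e.symm
    simp [subst, hxy]
  rw [hsub] at hres
  exact hres

/-! ### Renaming a free variable in a derivation -/

theorem DerivN.rename : ∀ n : ℕ, ∀ {Γ M σ}, DerivN n Γ M σ → ∀ {x y : ℕ},
    x ∈ fv M → y ∉ Γ.dom → y ∉ allV M →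
    DerivN n (envRen x y Γ) (Term.subst M x (Term.var y)) σ := by
  intro n
  induction n using Nat.strong_induction_on with
  | _ n IH =>
  intro Γ M σ h x y hx hyΓ hyM
  cases h with
  | ax _ _ _ =>
      simp only [fv, Finset.mem_singleton] at hx
      subst hx
      simp only [subst, if_pos rfl, envRen, List.map_cons, List.map_nil, if_pos rfl]
      exact DerivN.ax _ y _
  | eqv h1 he =>
      exact DerivN.eqv (IH _ (Nat.lt_succ_self _) h1 hx hyΓ hyM) he
  | perm h1 hp =>
      refine DerivN.perm (IH _ (Nat.lt_succ_self _) h1 hx ?_ hyM)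
        (hp.map (fun p : ℕ × Ty => if p.1 = x then (y, p.2) else p))
      exact fun hm => hyΓ ((hp.map Prod.fst).subset hm)
  | arrI h1 =>
      rename_i n' w α M₀ τ'
      simp only [fv, Finset.mem_sdiff, Finset.mem_singleton] at hx
      simp only [allV, Finset.mem_insert] at hyM
      push_neg at hyM
      have hxw : ¬ w = x := fun e => hx.2 e.symm
      have hyd : y ∉ Env.dom ((w, α) :: Γ) := by
        rw [Env.dom_cons]
        simp only [List.mem_cons]
        push_neg
        exact ⟨fun e => hyM.1 e, hyΓ⟩
      have D := IH _ (Nat.lt_succ_self _) h1 hx.1 hyd hyM.2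
      rw [envRen_cons, if_neg hxw] at D
      have := DerivN.arrI D
      simpa [subst, hxw] using this
  | arrE h1 h2 hd =>
      rename_i n' Γ₁ Γ₂ M₁ M₂ α
      rw [Env.dom_append, List.mem_append] at hyΓ
      push_neg at hyΓ
      simp only [allV, Finset.mem_union] at hyM
      push_neg at hyM
      rw [envRen_append]
      by_cases hx1 : x ∈ fv M₁
      · have hxΓ₁ : x ∈ Env.dom Γ₁ := (h1.toDeriv).fv_subset_dom x hx1
        have hxΓ₂ : x ∉ Env.dom Γ₂ := hd x hxΓ₁
        have hx2 : x ∉ fv M₂ := fun hm => hxΓ₂ ((h2.toDeriv).fv_subset_dom x hm)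
        have D1 := IH _ (Nat.lt_succ_self _) h1 hx1 hyΓ.1 hyM.1
        have := DerivN.arrE D1 h2 (EnvDisj_renL hd hyΓ.2)
        rw [envRen_of_not_mem hxΓ₂]
        simpa [subst, subst_of_not_mem_fv (Term.var y) hx2] using this
      · have hx2 : x ∈ fv M₂ := by
          simp only [fv, Finset.mem_union] at hx
          tauto
        have hxΓ₂ : x ∈ Env.dom Γ₂ := (h2.toDeriv).fv_subset_dom x hx2
        have hxΓ₁ : x ∉ Env.dom Γ₁ := fun hm => hd x hm hxΓ₂
        have D2 := IH _ (Nat.lt_succ_self _) h2 hx2 hyΓ.2 hyM.2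
        have := DerivN.arrE h1 D2 (EnvDisj_renR hd hyΓ.1)
        rw [envRen_of_not_mem hxΓ₁]
        simpa [subst, subst_of_not_mem_fv (Term.var y) hx1] using this
  | andI h1 h2 =>
      exact DerivN.andI (IH _ (Nat.lt_succ_self _) h1 hx hyΓ hyM)
        (IH _ (Nat.lt_succ_self _) h2 hx hyΓ hyM)
  | andE₁ h1 => exact DerivN.andE₁ (IH _ (Nat.lt_succ_self _) h1 hx hyΓ hyM)
  | andE₂ h1 => exact DerivN.andE₂ (IH _ (Nat.lt_succ_self _) h1 hx hyΓ hyM)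
  | orI₁ h1 => exact DerivN.orI₁ (IH _ (Nat.lt_succ_self _) h1 hx hyΓ hyM)
  | orI₂ h1 => exact DerivN.orI₂ (IH _ (Nat.lt_succ_self _) h1 hx hyΓ hyM)
  | orE h1 h2 h3 hd =>
      rename_i n' Γ₁ Γ₂ x' M' N' σt τt ζt
      rw [Env.dom_append, List.mem_append] at hyΓ
      push_neg at hyΓ
      obtain ⟨hyΓ₁, hyΓ₂⟩ := hyΓ
      have hnd1 : x' ∉ Env.dom Γ₁ := (h1.toDeriv).head_not_mem_dom
      rw [envRen_append]
      by_cases hxΓ₁ : x ∈ Env.dom Γ₁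
      · -- the renamed variable lives in Γ₁, hence in M'
        have hxΓ₂ : x ∉ Env.dom Γ₂ := hd x hxΓ₁
        have hxN' : x ∉ fv N' := fun hm => hxΓ₂ ((h3.toDeriv).fv_subset_dom x hm)
        have hxM' : x ∈ fv M' := by
          rcases mem_fv_subst hx with h | h
          · exact h.1
          · exact absurd h hxN'
        have hxx' : x ≠ x' := fun e => hnd1 (e ▸ hxΓ₁)
        rw [envRen_of_not_mem hxΓ₂]
        by_cases hyx' : y = x'
        · by_cases hx'M' : x' ∈ fv M'
          · -- pre-switch the orE variable to a fresh z
            set z := freshVar (allV M' ∪ allV N' ∪ (Env.dom Γ₁).toFinset ∪ (Env.dom Γ₂).toFinset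
              ∪ {x, y}) with hzdef
            have hz := freshVar_not_mem (allV M' ∪ allV N' ∪ (Env.dom Γ₁).toFinset
              ∪ (Env.dom Γ₂).toFinset ∪ {x, y})
            rw [← hzdef] at hz
            simp only [Finset.mem_union, Finset.mem_insert, Finset.mem_singleton,
              List.mem_toFinset] at hz
            push_neg at hz
            obtain ⟨⟨⟨⟨hzM', hzN'⟩, hzΓ₁⟩, hzΓ₂⟩, hzx, hzy⟩ := hz
            have hzx' : z ≠ x' := hyx' ▸ hzy
            have mk : ∀ (β : Ty), DerivN n' ((x', β) :: Γ₁) M' σ →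
                DerivN n' ((z, β) :: envRen x y Γ₁)
                  (subst (subst M' x' (Term.var z)) x (Term.var y)) σ := by
              intro β hder
              have hzdom : z ∉ Env.dom ((x', β) :: Γ₁) := by
                rw [Env.dom_cons]
                simp only [List.mem_cons]
                push_neg
                exact ⟨hzx', hzΓ₁⟩
              have Dz := IH _ (Nat.lt_succ_self _) hder hx'M' hzdom hzM'
              rw [envRen_cons, if_pos rfl, envRen_of_not_mem hnd1] at Dz
              have hydom : y ∉ Env.dom ((z, β) :: Γ₁) := by
                rw [Env.dom_cons]
                simp only [List.mem_cons]
                push_neg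
                exact ⟨Ne.symm hzy, hyΓ₁⟩
              have hyz : y ∉ allV (subst M' x' (Term.var z)) :=
                allV_subst_var_avoid hyM (Ne.symm hzy)
              have hxsub : x ∈ fv (subst M' x' (Term.var z)) :=
                fv_subset_fv_subst _ hxM' hxx'
              have Dzy := IH _ (Nat.lt_succ_self _) Dz hxsub hydom hyz
              rw [envRen_cons, if_neg (fun e : z = x => hzx e)] at Dzy
              exact Dzy
            have D1 := mk _ h1
            have D2 := mk _ h2
            have hres := DerivN.orE D1 D2 h3 (EnvDisj_renL hd hyΓ₂)
            rwa [subst_three hzM' hzx hzy hxx' hxN'] at hres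
          · -- x' does not occur at all in M' : swap it away
            have hsub_id : subst M' x' N' = M' := subst_of_not_mem_fv N' hx'M'
            rw [hsub_id] at hyM hx ⊢
            have hx'aV : x' ∉ allV M' := hyx' ▸ hyM
            set z := freshVar (allV M' ∪ (Env.dom Γ₁).toFinset ∪ {x, y}) with hzdef
            have hz := freshVar_not_mem (allV M' ∪ (Env.dom Γ₁).toFinset ∪ {x, y})
            rw [← hzdef] at hz
            simp only [Finset.mem_union, Finset.mem_insert, Finset.mem_singleton,
              List.mem_toFinset] at hz
            push_neg at hz
            obtain ⟨⟨hzM', hzΓ₁⟩, hzx, hzy⟩ := hz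
            have mk : ∀ (β : Ty), DerivN n' ((x', β) :: Γ₁) M' σ →
                DerivN n' ((z, β) :: envRen x y Γ₁) (subst M' x (Term.var y)) σ := by
              intro β hder
              have Ds := DerivN.swap (a := x') (b := z) hder
              rw [swT_fixed hx'aV hzM'] at Ds
              have henv : envSw x' z ((x', β) :: Γ₁) = (z, β) :: Γ₁ := by
                show (swV x' z x', β) :: envSw x' z Γ₁ = (z, β) :: Γ₁
                rw [envSw_of_not_mem hnd1 hzΓ₁]
                simp [swV]
              rw [henv] at Ds
              have hydom : y ∉ Env.dom ((z, β) :: Γ₁) := by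
                rw [Env.dom_cons]
                simp only [List.mem_cons]
                push_neg
                exact ⟨Ne.symm hzy, hyΓ₁⟩
              have Dsy := IH _ (Nat.lt_succ_self _) Ds hx hydom hyM
              rw [envRen_cons, if_neg (fun e : z = x => hzx e)] at Dsy
              exact Dsy
            have D1 := mk _ h1
            have D2 := mk _ h2
            have hres := DerivN.orE D1 D2 h3 (EnvDisj_renL hd hyΓ₂)
            have hzfv : z ∉ fv (subst M' x (Term.var y)) := by
              intro hm
              rcases mem_fv_subst hm with h | h
              · exact hzM' (fv_subset_allV _ h.1)
              · simp only [fv, Finset.mem_singleton] at h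
                exact hzy h
            rwa [subst_of_not_mem_fv N' hzfv] at hres
        · -- y ≠ x' : rename directly
          have hyM' : y ∉ allV M' := by
            intro hm
            exact hyM (allV_subset_allV_subst N' hm hyx')
          have mk : ∀ (β : Ty), DerivN n' ((x', β) :: Γ₁) M' σ →
              DerivN n' ((x', β) :: envRen x y Γ₁) (subst M' x (Term.var y)) σ := by
            intro β hder
            have hydom : y ∉ Env.dom ((x', β) :: Γ₁) := by
              rw [Env.dom_cons]
              simp only [List.mem_cons]
              push_neg
              exact ⟨hyx', hyΓ₁⟩
            have D := IH _ (Nat.lt_succ_self _) hder hxM' hydom hyM'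
            rw [envRen_cons, if_neg (fun e : x' = x => hxx' e.symm)] at D
            exact D
          have D1 := mk _ h1
          have D2 := mk _ h2
          have hres := DerivN.orE D1 D2 h3 (EnvDisj_renL hd hyΓ₂)
          rwa [subst_comm_var hxx' hyx' hxN'] at hres
      · -- the renamed variable lives in Γ₂, hence in N'
        have hxΓ₂ : x ∈ Env.dom Γ₂ := by
          have W : Deriv (Γ₁ ++ Γ₂) (subst M' x' N') σ :=
            Deriv.orE h1.toDeriv h2.toDeriv h3.toDeriv hd
          have := W.fv_subset_dom x hx
          rw [Env.dom_append, List.mem_append] at this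
          tauto
        have hxN' : x ∈ fv N' := by
          rcases mem_fv_subst hx with h | h
          · exfalso
            have := (h1.toDeriv).fv_subset_dom x h.1
            rw [Env.dom_cons] at this
            rcases List.mem_cons.1 this with h' | h'
            · exact h.2 h'
            · exact hxΓ₁ h'
          · exact h
        have hx'M' : x' ∈ fv M' := by
          by_contra hc
          rw [subst_of_not_mem_fv N' hc] at hx
          have := (h1.toDeriv).fv_subset_dom x hx
          rw [Env.dom_cons] at this
          rcases List.mem_cons.1 this with h' | h'
          · exact hc ((show x = x' from h') ▸ hx)
          · exact hxΓ₁ h'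
        have hyN' : y ∉ allV N' := fun hm => hyM (allV_of_fv_subst hx'M' hm)
        have D3 := IH _ (Nat.lt_succ_self _) h3 hxN' hyΓ₂ hyN'
        rw [envRen_of_not_mem hxΓ₁]
        by_cases hxx' : x = x'
        · subst hxx'
          have hres := DerivN.orE h1 h2 D3 (EnvDisj_renR hd hyΓ₁)
          rwa [← subst_subst_same] at hres
        · have hxM' : x ∉ fv M' := by
            intro hm
            have := (h1.toDeriv).fv_subset_dom x hm
            rw [Env.dom_cons] at this
            rcases List.mem_cons.1 this with h' | h'
            · exact hxx' h'
            · exact hxΓ₁ h'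
          have hcnt : cnt M' x' ≤ 1 := (h1.toDeriv).cnt_head_le_one
          have hnc : notCapt x x' M' := notCapt_of_mem_fv_subst hcnt hxM' hx
          have hres := DerivN.orE h1 h2 D3 (EnvDisj_renR hd hyΓ₁)
          rwa [subst_comm_notCapt hxx' hxM' hnc] at hres

/-! ### Decomposing an η-expansion of a substitution -/

theorem eta_decomp_nofv {M₀ : Term} {x : ℕ} {N Q : Term}
    (hxfv : x ∉ fv M₀) (hEta : Eta Q (subst M₀ x N)) :
    ∃ M₀', Eta M₀' M₀ ∧ subst M₀' x N = Q := by
  rw [subst_of_not_mem_fv N hxfv] at hEta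
  refine ⟨Q, hEta, subst_of_not_mem_fv N ?_⟩
  rw [hEta.fv_eq]
  exact hxfv

theorem eta_decomp_root {M₀ : Term} {x y z : ℕ} {N : Term}
    (hy1 : y ∉ allV M₀) (hy3 : y ≠ x) (hx : x ∈ fv M₀)
    (hz : z ∉ fv (subst M₀ x N)) :
    (∃ M₀', Eta M₀' M₀ ∧ subst M₀' x N
       = Term.lam z (Term.app (subst M₀ x N) (Term.var z))) ∨
    (∃ M₀', Eta M₀' (subst M₀ x (Term.var y)) ∧ subst M₀' y N
       = Term.lam z (Term.app (subst M₀ x N) (Term.var z)) ∧ x ∈ fv M₀) := by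
  by_cases hzx : z = x
  · subst hzx
    right
    have hyz : ¬ z = y := fun e => hy3 e.symm
    refine ⟨Term.lam z (Term.app (subst M₀ z (Term.var y)) (Term.var z)), ?_, ?_, hx⟩
    · refine Eta.eta z _ ?_
      exact not_mem_fv_subst_self (by simp [fv]; exact hyz)
    · have hzy' : ¬ z = y := hyz
      simp only [subst, if_neg hzy']
      rw [subst_subst_var N hy1]
  · left
    refine ⟨Term.lam z (Term.app M₀ (Term.var z)), Eta.eta z M₀ ?_, ?_⟩
    · intro hm
      exact hz (fv_subset_fv_subst N hm hzx)
    · simp [subst, hzx]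

theorem eta_decomp : ∀ (M₀ : Term) {x y : ℕ} {N Q : Term},
    cnt M₀ x ≤ 1 → y ∉ allV M₀ → y ∉ allV N → y ≠ x →
    Eta Q (subst M₀ x N) →
    (∃ M₀', Eta M₀' M₀ ∧ subst M₀' x N = Q) ∨
    (∃ N', Eta N' N ∧ subst M₀ x N' = Q ∧ x ∈ fv M₀) ∨
    (∃ M₀', Eta M₀' (subst M₀ x (Term.var y)) ∧ subst M₀' y N = Q ∧ x ∈ fv M₀) := by
  intro M₀
  induction M₀ with
  | var v =>
      intro x y N Q hc hy1 hy2 hy3 hEta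
      by_cases hxfv : x ∈ fv (Term.var v)
      · simp only [fv, Finset.mem_singleton] at hxfv
        subst hxfv
        simp only [subst, if_pos rfl] at hEta
        right; left
        exact ⟨Q, hEta, by simp [subst], by simp [fv]⟩
      · exact Or.inl (eta_decomp_nofv hxfv hEta)
  | app A B ihA ihB =>
      intro x y N Q hc hy1 hy2 hy3 hEta
      by_cases hxfv : x ∈ fv (Term.app A B)
      · simp only [allV, Finset.mem_union] at hy1
        push_neg at hy1
        simp only [cnt] at hc
        simp only [subst] at hEta
        cases hEta with
        | eta z _ hz =>
            rcases eta_decomp_root (N := N) (z := z)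
                (by simp only [allV, Finset.mem_union]; push_neg; exact hy1)
                hy3 hxfv (by simpa [subst] using hz) with
              ⟨M₀', e, hs⟩ | ⟨M₀', e, hs, hxm⟩
            · exact Or.inl ⟨M₀', e, by simpa [subst] using hs⟩
            · exact Or.inr (Or.inr ⟨M₀', by simpa [subst] using e,
                by simpa [subst] using hs, hxm⟩)
        | appL _ hA =>
            rename_i QA
            rcases ihA (by omega) hy1.1 hy2 hy3 hA with
              ⟨A₁, e, hs⟩ | ⟨N', e, hs, hxA⟩ | ⟨A₁, e, hs, hxA⟩
            · exact Or.inl ⟨Term.app A₁ B, Eta.appL B e, by simp [subst, hs]⟩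
            · have hxB : x ∉ fv B := by
                have : 0 < cnt A x := (cnt_pos_iff_mem_fv _ _).2 hxA
                have : cnt B x = 0 := by omega
                exact (cnt_eq_zero_iff_not_mem_fv _ _).1 this
              refine Or.inr (Or.inl ⟨N', e, ?_, ?_⟩)
              · simp [subst, hs, subst_of_not_mem_fv N' hxB, subst_of_not_mem_fv N hxB]
              · simp only [fv, Finset.mem_union]; exact Or.inl hxA
            · refine Or.inr (Or.inr ⟨Term.app A₁ (subst B x (Term.var y)), ?_, ?_, ?_⟩)
              · simp only [subst]
                exact Eta.appL _ e
              · simp only [subst]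
                rw [hs, subst_subst_var N hy1.2]
              · simp only [fv, Finset.mem_union]; exact Or.inl hxA
        | appR _ hB =>
            rename_i QB
            rcases ihB (by omega) hy1.2 hy2 hy3 hB with
              ⟨B₁, e, hs⟩ | ⟨N', e, hs, hxB⟩ | ⟨B₁, e, hs, hxB⟩
            · exact Or.inl ⟨Term.app A B₁, Eta.appR A e, by simp [subst, hs]⟩
            · have hxA : x ∉ fv A := by
                have : 0 < cnt B x := (cnt_pos_iff_mem_fv _ _).2 hxB
                have : cnt A x = 0 := by omega
                exact (cnt_eq_zero_iff_not_mem_fv _ _).1 this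
              refine Or.inr (Or.inl ⟨N', e, ?_, ?_⟩)
              · simp [subst, hs, subst_of_not_mem_fv N' hxA, subst_of_not_mem_fv N hxA]
              · simp only [fv, Finset.mem_union]; exact Or.inr hxB
            · refine Or.inr (Or.inr ⟨Term.app (subst A x (Term.var y)) B₁, ?_, ?_, ?_⟩)
              · simp only [subst]
                exact Eta.appR _ e
              · simp only [subst]
                rw [hs, subst_subst_var N hy1.1]
              · simp only [fv, Finset.mem_union]; exact Or.inr hxB
      · exact Or.inl (eta_decomp_nofv hxfv hEta)
  | lam w B ihB =>
      intro x y N Q hc hy1 hy2 hy3 hEta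
      by_cases hxfv : x ∈ fv (Term.lam w B)
      · simp only [fv, Finset.mem_sdiff, Finset.mem_singleton] at hxfv
        have hwx : ¬ w = x := fun e => hxfv.2 e.symm
        simp only [allV, Finset.mem_insert] at hy1
        push_neg at hy1
        have hyw : ¬ w = y := fun e => hy1.1 e.symm
        simp only [cnt, if_neg hwx] at hc
        simp only [subst, if_neg hwx] at hEta
        cases hEta with
        | eta z _ hz =>
            have hsub : subst (Term.lam w B) x N = Term.lam w (subst B x N) := by
              simp [subst, if_neg hwx]
            rw [← hsub] at hz
            have hx' : x ∈ fv (Term.lam w B) := by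
              simp only [fv, Finset.mem_sdiff, Finset.mem_singleton]; exact hxfv
            have hy1' : y ∉ allV (Term.lam w B) := by
              simp only [allV, Finset.mem_insert]; push_neg; exact hy1
            rcases eta_decomp_root (N := N) (z := z) hy1' hy3 hx' hz with
              ⟨M₀', e, hs⟩ | ⟨M₀', e, hs, hxm⟩
            · refine Or.inl ⟨M₀', e, ?_⟩
              rw [hs, hsub]
            · refine Or.inr (Or.inr ⟨M₀', e, ?_, hx'⟩)
              rw [hs, hsub]
        | lam _ hB =>
            rename_i QB
            rcases ihB hc hy1.2 hy2 hy3 hB with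
              ⟨B₁, e, hs⟩ | ⟨N', e, hs, hxB⟩ | ⟨B₁, e, hs, hxB⟩
            · exact Or.inl ⟨Term.lam w B₁, Eta.lam w e, by simp [subst, if_neg hwx, hs]⟩
            · refine Or.inr (Or.inl ⟨N', e, by simp [subst, if_neg hwx, hs], ?_⟩)
              simp only [fv, Finset.mem_sdiff, Finset.mem_singleton]
              exact hxfv
            · refine Or.inr (Or.inr ⟨Term.lam w B₁, ?_, ?_, ?_⟩)
              · simp only [subst, if_neg hwx]
                exact Eta.lam w e
              · simp only [subst, if_neg hyw]
                rw [hs]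
              · simp only [fv, Finset.mem_sdiff, Finset.mem_singleton]
                exact hxfv
      · exact Or.inl (eta_decomp_nofv hxfv hEta)

/-! ### Subject expansion for one η-step -/

theorem eta_exp_typedN : ∀ n : ℕ, ∀ {Γ P σ}, DerivN n Γ P σ → ∀ {Q}, Eta Q P →
    Deriv Γ Q σ := by
  intro n
  induction n using Nat.strong_induction_on with
  | _ n IH =>
  intro Γ P σ h Q hEta
  cases h with
  | ax _ _ _ =>
      cases hEta with
      | eta z _ hz => exact eta_expand (Deriv.ax _ _) hz
  | eqv h1 he => exact Deriv.eqv (IH _ (Nat.lt_succ_self _) h1 hEta) he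
  | perm h1 hp => exact Deriv.perm (IH _ (Nat.lt_succ_self _) h1 hEta) hp
  | arrI h1 =>
      cases hEta with
      | eta z _ hz => exact eta_expand (Deriv.arrI h1.toDeriv) hz
      | lam _ hB => exact Deriv.arrI (IH _ (Nat.lt_succ_self _) h1 hB)
  | arrE h1 h2 hd =>
      cases hEta with
      | eta z _ hz => exact eta_expand (Deriv.arrE h1.toDeriv h2.toDeriv hd) hz
      | appL _ hA => exact Deriv.arrE (IH _ (Nat.lt_succ_self _) h1 hA) h2.toDeriv hd
      | appR _ hB => exact Deriv.arrE h1.toDeriv (IH _ (Nat.lt_succ_self _) h2 hB) hd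
  | andI h1 h2 =>
      exact Deriv.andI (IH _ (Nat.lt_succ_self _) h1 hEta)
        (IH _ (Nat.lt_succ_self _) h2 hEta)
  | andE₁ h1 => exact Deriv.andE₁ (IH _ (Nat.lt_succ_self _) h1 hEta)
  | andE₂ h1 => exact Deriv.andE₂ (IH _ (Nat.lt_succ_self _) h1 hEta)
  | orI₁ h1 => exact Deriv.orI₁ (IH _ (Nat.lt_succ_self _) h1 hEta)
  | orI₂ h1 => exact Deriv.orI₂ (IH _ (Nat.lt_succ_self _) h1 hEta)
  | orE h1 h2 h3 hd =>
      rename_i n' Γ₁ Γ₂ x' M' N' σt τt ζt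
      have hc : cnt M' x' ≤ 1 := (h1.toDeriv).cnt_head_le_one
      have hnd1 : x' ∉ Env.dom Γ₁ := (h1.toDeriv).head_not_mem_dom
      set y := freshVar (allV M' ∪ allV N' ∪ (Env.dom Γ₁).toFinset ∪ {x'}) with hydef
      have hy := freshVar_not_mem (allV M' ∪ allV N' ∪ (Env.dom Γ₁).toFinset ∪ {x'})
      rw [← hydef] at hy
      simp only [Finset.mem_union, Finset.mem_singleton, List.mem_toFinset] at hy
      push_neg at hy
      obtain ⟨⟨⟨hyM', hyN'⟩, hyΓ₁⟩, hyx'⟩ := hy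
      rcases eta_decomp M' hc hyM' hyN' hyx' hEta with
        ⟨M₁, e, hs⟩ | ⟨N₁, e, hs, hxm⟩ | ⟨M₁, e, hs, hxm⟩
      · have D1 := IH _ (Nat.lt_succ_self _) h1 e
        have D2 := IH _ (Nat.lt_succ_self _) h2 e
        have hres := Deriv.orE D1 D2 h3.toDeriv hd
        rwa [hs] at hres
      · have D3 := IH _ (Nat.lt_succ_self _) h3 e
        have hres := Deriv.orE h1.toDeriv h2.toDeriv D3 hd
        rwa [hs] at hres
      · have mk : ∀ (β : Ty), DerivN n' ((x', β) :: Γ₁) M' σ →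
            Deriv ((y, β) :: Γ₁) M₁ σ := by
          intro β hder
          have hydom : y ∉ Env.dom ((x', β) :: Γ₁) := by
            rw [Env.dom_cons]
            simp only [List.mem_cons]
            push_neg
            exact ⟨hyx', hyΓ₁⟩
          have Dy := DerivN.rename _ hder hxm hydom hyM'
          rw [envRen_cons, if_pos rfl, envRen_of_not_mem hnd1] at Dy
          exact IH _ (Nat.lt_succ_self _) Dy e
        have hres := Deriv.orE (mk _ h1) (mk _ h2) h3.toDeriv hd
        rwa [hs] at hres

theorem eta_exp_typed {Γ P σ Q} (h : Deriv Γ P σ) (he : Eta Q P) : Deriv Γ Q σ := by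
  obtain ⟨n, hn⟩ := h.toDerivN
  exact eta_exp_typedN n hn he

/-- Subject expansion for η: if `M` is linear, `M →η* N` and `Γ ⊢ N : σ`, then
`Γ ⊢ M : σ`; in particular if `x ∉ fv M` and `Γ ⊢ M : σ` then `Γ ⊢ λx. M x : σ`. -/
theorem subject_expansion_eta :
    (∀ (Γ : Env) (M N : Term) (σ : Ty),
        Linear M → EtaStar M N → Deriv Γ N σ → Deriv Γ M σ) ∧
    (∀ (Γ : Env) (M : Term) (x : ℕ) (σ : Ty),
        Linear M → x ∉ fv M → Deriv Γ M σ →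
        Deriv Γ (Term.lam x (Term.app M (Term.var x))) σ) := by
  constructor
  · intro Γ M N σ _hlin hstar hN
    clear _hlin
    induction hstar using Relation.ReflTransGen.head_induction_on with
    | refl => exact hN
    | head hstep _ ih => exact eta_exp_typed ih hstep
  · intro Γ M x σ _hlin hx h
    exact eta_expand h hx

end TypeIso
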